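/- Suppose f_out(·;θ) is linear and the cross-entropy loss for target class k is CE(p, y) = y_k·log(p_k). Then the gradient ∇_θ CE(f_out(e_v;θ), y_v) with e_v = Σ_{w∈V_v} π(v,w)x_w equals the weighted sum Σ_{w∈V_v} α_w · ∇_θ CE(f_out(x_w;θ), y_v), where α_w = f_out(x_w;θ)_k · π(v,w) / Σ_{u∈V_v} f_out(π(v,u)x_u;θ)_k, provided all f_out(x_w;θ)_k and the denominator are positive. -/

import Mathlib

/-- The linear output function `f_out(x;θ) = θ x` with parameter matrix θ. -/
noncomputable def foutLin {b C : ℕ} (θ : Fin C → Fin b → ℝ) (z : Fin b → ℝ) : Fin C → ℝ :=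
  fun k => ∑ j, θ k j * z j

/-- The map `θ ↦ foutLin θ z k` as a continuous linear map. -/
noncomputable def Lmap {b C : ℕ} (k : Fin C) (z : Fin b → ℝ) :
    (Fin C → Fin b → ℝ) →L[ℝ] ℝ :=
  ∑ j, z j • ((ContinuousLinearMap.proj j).comp
      (ContinuousLinearMap.proj k : (Fin C → Fin b → ℝ) →L[ℝ] (Fin b → ℝ)))

lemma Lmap_apply {b C : ℕ} (k : Fin C) (z : Fin b → ℝ) (θ : Fin C → Fin b → ℝ) :
    Lmap k z θ = ∑ j, z j * θ k j := by
  simp [Lmap]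

lemma hasFDerivAt_foutLin {b C : ℕ} (k : Fin C) (z : Fin b → ℝ) (θ₀ : Fin C → Fin b → ℝ) :
    HasFDerivAt (fun θ : Fin C → Fin b → ℝ => foutLin θ z k) (Lmap k z) θ₀ := by
  have h : (fun θ : Fin C → Fin b → ℝ => foutLin θ z k) = Lmap k z := by
    funext θ
    simp [foutLin, Lmap_apply, mul_comm]
  rw [h]
  exact (Lmap k z).hasFDerivAt

/-- pseudo-training, Theorem 1.2: for linear `f_out` and
cross-entropy loss `CE(p,y) = y_k · log p_k`, the gradient w.r.t. θ of the loss
on the topology-aware embedding `e_v = ∑ w, π v w • x w` equals the weighted sum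
of the gradients of the losses on the individual (pseudo-labeled) node features,
with adaptive weights `α_w`. -/
theorem pdgnn_pseudo_training_gradient
    {V : Type*} [Fintype V] {b C : ℕ}
    (x : V → Fin b → ℝ) (π : V → V → ℝ) (v : V)
    (y : Fin C → ℝ) (k : Fin C) (hy : y k = 1)
    (θ₀ : Fin C → Fin b → ℝ)
    (e : Fin b → ℝ) (he : e = ∑ w : V, π v w • x w)
    (hpos : ∀ w : V, 0 < foutLin θ₀ (x w) k)
    (hden : 0 < ∑ u : V, foutLin θ₀ (π v u • x u) k)
    (α : V → ℝ)
    (hα : ∀ w : V, α w =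
      foutLin θ₀ (x w) k * π v w / ∑ u : V, foutLin θ₀ (π v u • x u) k) :
    fderiv ℝ (fun θ : Fin C → Fin b → ℝ => y k * Real.log (foutLin θ e k)) θ₀
      = ∑ w : V, α w •
          fderiv ℝ (fun θ : Fin C → Fin b → ℝ => y k * Real.log (foutLin θ (x w) k)) θ₀ := by
  set D : ℝ := ∑ u : V, foutLin θ₀ (π v u • x u) k with hD
  -- foutLin of a scalar multiple
  have hsmul : ∀ (c : ℝ) (z : Fin b → ℝ) (θ : Fin C → Fin b → ℝ),
      foutLin θ (c • z) k = c * foutLin θ z k := by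
    intro c z θ
    simp only [foutLin, Pi.smul_apply, smul_eq_mul, Finset.mul_sum]
    exact Finset.sum_congr rfl fun i _ => by ring
  -- foutLin θ₀ e k = D
  have hFe : foutLin θ₀ e k = D := by
    rw [he, hD]
    simp only [foutLin, Finset.sum_apply, Pi.smul_apply, smul_eq_mul, Finset.mul_sum]
    rw [Finset.sum_comm]
  have hFe_pos : 0 < foutLin θ₀ e k := hFe ▸ hden
  -- derivatives
  have hL : fderiv ℝ (fun θ : Fin C → Fin b → ℝ => y k * Real.log (foutLin θ e k)) θ₀
      = y k • (foutLin θ₀ e k)⁻¹ • Lmap k e := by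
    exact (((hasFDerivAt_foutLin k e θ₀).log hFe_pos.ne').const_mul (y k)).fderiv
  have hR : ∀ w : V,
      fderiv ℝ (fun θ : Fin C → Fin b → ℝ => y k * Real.log (foutLin θ (x w) k)) θ₀
      = y k • (foutLin θ₀ (x w) k)⁻¹ • Lmap k (x w) := by
    intro w
    exact (((hasFDerivAt_foutLin k (x w) θ₀).log (hpos w).ne').const_mul (y k)).fderiv
  rw [hL]
  simp only [hR]
  simp only [hy, one_smul]
  ext θ
  simp only [ContinuousLinearMap.smul_apply, ContinuousLinearMap.sum_apply, Lmap_apply,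
    smul_eq_mul, hFe]
  rw [he]
  have hsum : ∑ j, (∑ w : V, π v w • x w) j * θ k j
      = ∑ w : V, π v w * ∑ j, x w j * θ k j := by
    simp only [Finset.sum_apply, Pi.smul_apply, smul_eq_mul, Finset.sum_mul, Finset.mul_sum]
    rw [Finset.sum_comm]
    exact Finset.sum_congr rfl fun w _ => Finset.sum_congr rfl fun i _ => by ring
  rw [hsum, Finset.mul_sum]
  congr 1
  funext w
  have h1 : foutLin θ₀ (x w) k ≠ 0 := (hpos w).ne'
  have h2 : D ≠ 0 := hden.ne'
  rw [hα w]
  field_simp
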